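/- Let $\{a_n\}_{n\in\mathbb{Z}}$ satisfy $0<a_-\le a_n\le a_+<\infty$, and let $T_n^z$ be the transfer matrices of the divergence-gradient Jacobi operator. Suppose $\|T_m^0(S^j)\| \le C_1 m$ for all shifts $j$ and all $m\ge 1$, where $C_1 = 8a_+^2/a_-$. Then for every $z\in\mathbb{C}$ and $n\ge 1$, $\|T_n^z\| \le C_1 n\, e^{C_2 n^2 |z|}$, where $C_2 = 8a_+^2/a_-^2$. -/

import Mathlib

open Matrix

attribute [local instance] Matrix.normedAddCommGroup
attribute [local instance] Matrix.normedSpace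

/-- Telescoping bound: if all shifted transfer-matrix products at energy `0` grow at most
linearly, `‖T_m^0(S^j)‖ ≤ C₁ m` with `C₁ = 8 a₊²/a₋`, then for every complex energy `z`,
`‖T_n^z‖ ≤ C₁ n e^{C₂ n² |z|}` with `C₂ = 8 a₊²/a₋²`. -/
theorem transfer_matrix_exp_bound
    (a : ℤ → ℝ) (am ap : ℝ) (ham : 0 < am)
    (hbd : ∀ n : ℤ, am ≤ a n ∧ a n ≤ ap)
    (A : ℂ → ℤ → Matrix (Fin 2) (Fin 2) ℂ)
    (hA : ∀ (z : ℂ) (j : ℤ),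
      A z j = ((a j : ℂ))⁻¹ • !![(a (j + 1) : ℂ) + (a j : ℂ) - z, -(a j : ℂ) ^ 2; 1, 0])
    -- `T z j m` is the product `A_{j+m-1}^z ⋯ A_j^z` (the shifted transfer matrix `T_m^z(S^j)`)
    (T : ℂ → ℤ → ℕ → Matrix (Fin 2) (Fin 2) ℂ)
    (hT0 : ∀ (z : ℂ) (j : ℤ), T z j 0 = 1)
    (hTs : ∀ (z : ℂ) (j : ℤ) (m : ℕ), T z j (m + 1) = A z (j + m) * T z j m)
    (hlin : ∀ (j : ℤ) (m : ℕ), 1 ≤ m → ‖T 0 j m‖ ≤ (8 * ap ^ 2 / am) * m) :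
    ∀ (z : ℂ) (n : ℕ), 1 ≤ n →
      ‖T z 0 n‖ ≤ (8 * ap ^ 2 / am) * n *
        Real.exp ((8 * ap ^ 2 / am ^ 2) * n ^ 2 * ‖z‖) := by
  intro z n hn
  set C₁ : ℝ := 8 * ap ^ 2 / am with hC₁def
  have haj : ∀ j : ℤ, 0 < a j := fun j => lt_of_lt_of_le ham (hbd j).1
  have hajne : ∀ j : ℤ, (a j : ℂ) ≠ 0 := fun j => by
    exact_mod_cast (haj j).ne'
  set E : Matrix (Fin 2) (Fin 2) ℂ := !![1, 0; 0, 0] with hE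
  -- splitting of the one-step matrix
  have hAsplit : ∀ (w : ℂ) (j : ℤ), A w j = A 0 j - (w * (a j : ℂ)⁻¹) • E := by
    intro w j
    rw [hA, hA]
    ext i k
    fin_cases i <;> fin_cases k <;>
      simp [hE, Matrix.smul_apply, Matrix.sub_apply] <;> ring
  -- telescoping identity
  have tele : ∀ (j : ℤ) (m : ℕ), T z j m = T 0 j m -
      ∑ k ∈ Finset.range m, (z * (a (j + k) : ℂ)⁻¹) •
        (T 0 (j + k + 1) (m - 1 - k) * E * T z j k) := by
    intro j m
    induction m with
    | zero => simp [hT0]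
    | succ m ih =>
      rw [hTs z, hAsplit z, Matrix.sub_mul, Matrix.smul_mul]
      have h1 : A 0 (j + (m : ℤ)) * T z j m
          = T 0 j (m + 1) - ∑ k ∈ Finset.range m,
            (z * (a (j + k) : ℂ)⁻¹) • (T 0 (j + k + 1) (m - k) * E * T z j k) := by
        rw [ih, Matrix.mul_sub, Finset.mul_sum, hTs 0]
        congr 1
        refine Finset.sum_congr rfl fun k hk => ?_
        rw [Finset.mem_range] at hk
        rw [Matrix.mul_smul]
        congr 1
        rw [← Matrix.mul_assoc, ← Matrix.mul_assoc]
        congr 2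
        have h2 : m - k = (m - 1 - k) + 1 := by omega
        have h3 : j + (k : ℤ) + 1 + ((m - 1 - k : ℕ) : ℤ) = j + m := by omega
        rw [h2, hTs 0, h3]
      rw [h1, Finset.sum_range_succ]
      simp only [Nat.add_sub_cancel, Nat.sub_self, hT0, Matrix.one_mul]
      rw [sub_sub]
  -- rank-one product bound
  have hMEN : ∀ M N : Matrix (Fin 2) (Fin 2) ℂ, ‖M * E * N‖ ≤ ‖M‖ * ‖N‖ := by
    intro M N
    rw [Matrix.norm_le_iff (mul_nonneg (norm_nonneg M) (norm_nonneg N))]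
    intro i j
    have h : (M * E * N) i j = M i 0 * N 0 j := by
      simp [Matrix.mul_apply, hE, Fin.sum_univ_two]
    rw [h, norm_mul]
    exact mul_le_mul (Matrix.norm_entry_le_entrywise_sup_norm M)
      (Matrix.norm_entry_le_entrywise_sup_norm N) (norm_nonneg _) (norm_nonneg _)
  have hnorm_one : ‖(1 : Matrix (Fin 2) (Fin 2) ℂ)‖ ≤ 1 := by
    rw [Matrix.norm_le_iff zero_le_one]
    intro i j
    rw [Matrix.one_apply]
    split_ifs <;> simp
  -- C₁ ≥ 1
  have hC1_ge : 1 ≤ C₁ := by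
    have h := hlin 0 1 le_rfl
    have hT1 : T 0 0 1 = A 0 0 := by
      have := hTs 0 0 0
      simpa [hT0] using this
    rw [hT1, hA] at h
    simp only [Nat.cast_one, mul_one] at h
    have e01 : ‖(((a 0 : ℂ))⁻¹ • !![(a (0 + 1) : ℂ) + (a 0 : ℂ) - 0, -(a 0 : ℂ) ^ 2; 1, 0]) 0 1‖
        = a 0 := by
      have : (((a 0 : ℂ))⁻¹ • !![(a (0 + 1) : ℂ) + (a 0 : ℂ) - 0, -(a 0 : ℂ) ^ 2; 1, 0]) 0 1
          = -(a 0 : ℂ) := by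
        simp [Matrix.smul_apply]
        rw [sq]
        exact inv_mul_cancel_left₀ (hajne 0) _
      rw [this]
      rw [norm_neg]
      simp [abs_of_pos (haj 0)]
    have e10 : ‖(((a 0 : ℂ))⁻¹ • !![(a (0 + 1) : ℂ) + (a 0 : ℂ) - 0, -(a 0 : ℂ) ^ 2; 1, 0]) 1 0‖
        = (a 0)⁻¹ := by
      have : (((a 0 : ℂ))⁻¹ • !![(a (0 + 1) : ℂ) + (a 0 : ℂ) - 0, -(a 0 : ℂ) ^ 2; 1, 0]) 1 0
          = ((a 0 : ℂ))⁻¹ := by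
        simp [Matrix.smul_apply]
      rw [this]
      rw [norm_inv]
      simp [abs_of_pos (haj 0)]
    have h1 : a 0 ≤ C₁ := e01 ▸ le_trans (Matrix.norm_entry_le_entrywise_sup_norm _) h
    have h2 : (a 0)⁻¹ ≤ C₁ := e10 ▸ le_trans (Matrix.norm_entry_le_entrywise_sup_norm _) h
    rcases le_or_gt 1 (a 0) with hc | hc
    · linarith
    · have hinv : a 0 * (a 0)⁻¹ = 1 := mul_inv_cancel₀ (haj 0).ne'
      nlinarith [mul_pos (sub_pos.mpr hc) (inv_pos.mpr (haj 0))]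
  have hC1_nonneg : 0 ≤ C₁ := le_trans zero_le_one hC1_ge
  have hn' : (1 : ℝ) ≤ n := by exact_mod_cast hn
  set x : ℝ := 8 * ap ^ 2 / am ^ 2 * n * ‖z‖ with hxdef
  have hx_nonneg : 0 ≤ x := by
    rw [hxdef]
    have h1 : 0 ≤ 8 * ap ^ 2 / am ^ 2 := div_nonneg (by positivity) (by positivity)
    have h2 : 0 ≤ ‖z‖ := norm_nonneg z
    positivity
  have h1x : (0 : ℝ) < 1 + x := by linarith
  -- uniform linear bound at energy 0
  have hTm_le : ∀ (j : ℤ) (m : ℕ), m ≤ n → ‖T 0 j m‖ ≤ C₁ * n := by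
    intro j m hm
    rcases Nat.eq_zero_or_pos m with h0 | h1
    · subst h0
      rw [hT0]
      calc ‖(1 : Matrix (Fin 2) (Fin 2) ℂ)‖ ≤ 1 := hnorm_one
        _ ≤ C₁ := hC1_ge
        _ ≤ C₁ * n := le_mul_of_one_le_right hC1_nonneg hn'
    · calc ‖T 0 j m‖ ≤ C₁ * m := hlin j m h1
        _ ≤ C₁ * n := by
          have : (m : ℝ) ≤ n := by exact_mod_cast hm
          exact mul_le_mul_of_nonneg_left this hC1_nonneg
  -- main induction
  have main : ∀ k, k ≤ n → ‖T z 0 k‖ ≤ C₁ * n * (1 + x) ^ k := by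
    intro k
    induction k using Nat.strong_induction_on with
    | _ k ih =>
      intro hk
      rw [tele 0 k]
      calc ‖T 0 0 k - ∑ i ∈ Finset.range k, (z * (a ((0 : ℤ) + i) : ℂ)⁻¹) •
            (T 0 ((0 : ℤ) + i + 1) (k - 1 - i) * E * T z 0 i)‖
          ≤ ‖T 0 0 k‖ + ‖∑ i ∈ Finset.range k, (z * (a ((0 : ℤ) + i) : ℂ)⁻¹) •
            (T 0 ((0 : ℤ) + i + 1) (k - 1 - i) * E * T z 0 i)‖ := norm_sub_le _ _
        _ ≤ C₁ * n + ∑ i ∈ Finset.range k, x * (C₁ * n) * (1 + x) ^ i := by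
            refine add_le_add (hTm_le 0 k hk) (le_trans (norm_sum_le _ _)
              (Finset.sum_le_sum fun i hi => ?_))
            rw [Finset.mem_range] at hi
            rw [norm_smul]
            have hcoef : ‖z * ((a ((0 : ℤ) + i) : ℂ))⁻¹‖ ≤ ‖z‖ / am := by
              rw [norm_mul, norm_inv]
              have h1 : ‖((a ((0 : ℤ) + i) : ℝ) : ℂ)‖ = a ((0 : ℤ) + i) := by
                simp [abs_of_pos (haj _)]
              rw [h1]
              have h2 : ‖z‖ = ‖z‖ := rfl
              rw [h2, ← div_eq_mul_inv]
              exact div_le_div_of_nonneg_left (norm_nonneg z) ham (hbd _).1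
            have hmat : ‖T 0 ((0 : ℤ) + i + 1) (k - 1 - i) * E * T z 0 i‖
                ≤ (C₁ * n) * (C₁ * n * (1 + x) ^ i) := by
              refine le_trans (hMEN _ _) (mul_le_mul (hTm_le _ _ (by omega))
                (ih i hi (by omega)) (norm_nonneg _) ?_)
              positivity
            calc ‖z * ((a ((0 : ℤ) + i) : ℂ))⁻¹‖ * ‖T 0 ((0 : ℤ) + i + 1) (k - 1 - i) * E * T z 0 i‖
                ≤ (‖z‖ / am) * ((C₁ * n) * (C₁ * n * (1 + x) ^ i)) := by
                  refine mul_le_mul hcoef hmat (norm_nonneg _) ?_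
                  positivity
              _ = x * (C₁ * n) * (1 + x) ^ i := by
                  rw [hxdef, hC₁def]
                  field_simp
        _ = C₁ * n * (1 + x) ^ k := by
            have hsum : ∑ i ∈ Finset.range k, x * (C₁ * n) * (1 + x) ^ i
                = x * (C₁ * n) * ∑ i ∈ Finset.range k, (1 + x) ^ i := by
              rw [Finset.mul_sum]
            rw [hsum]
            have geo := geom_sum_mul (1 + x) k
            linear_combination (C₁ * (n : ℝ)) * geo
  -- conclude
  have hfin := main n le_rfl
  have hexp : (1 + x) ^ n ≤ Real.exp ((n : ℝ) * x) := by
    calc (1 + x) ^ n ≤ (Real.exp x) ^ n := by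
          refine pow_le_pow_left₀ (by linarith) ?_ n
          linarith [Real.add_one_le_exp x]
      _ = Real.exp ((n : ℝ) * x) := by
          rw [← Real.exp_nat_mul]
  calc ‖T z 0 n‖ ≤ C₁ * n * (1 + x) ^ n := hfin
    _ ≤ C₁ * n * Real.exp ((n : ℝ) * x) :=
        mul_le_mul_of_nonneg_left hexp (by positivity)
    _ = C₁ * n * Real.exp (8 * ap ^ 2 / am ^ 2 * (n : ℝ) ^ 2 * ‖z‖) := by
        rw [hxdef]
        ring_nf
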